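/- SJF is envy-free in expectation for a single resource: with one unit-capacity resource and work amounts w_1 ≤ … ≤ w_n (> 0), under the serial schedule in increasing order of work with random tie-breaking among agents of equal work, for any two agents i, j the expected time at which agent i would complete work w_i using agent j's allocation is at least agent i's own expected completion time. -/

import Mathlib

open scoped BigOperators ENNReal

/-- SJF with uniform random tie-breaking is envy-free in
expectation for a single resource.  Expectations over the uniformly random
valid SJF orders are compared via sums over all such orders; the cost of agent
i using agent j's allocation is the end of j's service interval shifted to the
moment work w i is done if w i ≤ w j, and +∞ otherwise. -/
theorem stmt_8 (n : ℕ) (w : Fin n → ℝ) (hw : ∀ i, 0 < w i) (hmono : Monotone w) :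
    ∀ i j : Fin n,
      ∑ π ∈ Finset.univ.filter
          (fun π : Equiv.Perm (Fin n) => ∀ a b : Fin n, π a < π b → w a ≤ w b),
        ENNReal.ofReal (∑ k ∈ Finset.univ.filter (fun k => π k ≤ π i), w k)
      ≤
      ∑ π ∈ Finset.univ.filter
          (fun π : Equiv.Perm (Fin n) => ∀ a b : Fin n, π a < π b → w a ≤ w b),
        (if w i ≤ w j then
          ENNReal.ofReal
            ((∑ k ∈ Finset.univ.filter (fun k => π k ≤ π j), w k) - w j + w i)
        else ⊤) := by
  intro i j
  set S := Finset.univ.filter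
      (fun π : Equiv.Perm (Fin n) => ∀ a b : Fin n, π a < π b → w a ≤ w b) with hS
  by_cases hij : w i ≤ w j
  · simp only [if_pos hij]
    rcases eq_or_lt_of_le hij with heq | hlt
    · -- equal work: use the swap bijection
      have hws : ∀ a, w (Equiv.swap i j a) = w a := by
        intro a
        rcases eq_or_ne a i with rfl | hai
        · simp [Equiv.swap_apply_left, heq]
        rcases eq_or_ne a j with rfl | haj
        · simp [Equiv.swap_apply_right, heq]
        · rw [Equiv.swap_apply_of_ne_of_ne hai haj]
      refine le_of_eq ?_
      refine Finset.sum_nbij' (fun π => (Equiv.swap i j).trans π)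
        (fun π => (Equiv.swap i j).trans π) ?_ ?_ ?_ ?_ ?_
      · intro π hπ
        simp only [hS, Finset.mem_filter, Finset.mem_univ, true_and] at hπ ⊢
        intro a b hlt'
        have := hπ (Equiv.swap i j a) (Equiv.swap i j b) hlt'
        rwa [hws, hws] at this
      · intro π hπ
        simp only [hS, Finset.mem_filter, Finset.mem_univ, true_and] at hπ ⊢
        intro a b hlt'
        have := hπ (Equiv.swap i j a) (Equiv.swap i j b) hlt'
        rwa [hws, hws] at this
      · intro π _
        ext a
        simp [Equiv.swap_apply_self]
      · intro π _
        ext a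
        simp [Equiv.swap_apply_self]
      · intro π hπ
        simp only [Equiv.trans_apply, Equiv.swap_apply_right]
        have h1 : (∑ k ∈ Finset.univ.filter
              (fun k => π (Equiv.swap i j k) ≤ π i), w k) - w j + w i
            = ∑ k ∈ Finset.univ.filter
              (fun k => π (Equiv.swap i j k) ≤ π i), w k := by
          rw [← heq]; ring
        rw [h1]
        congr 1
        refine Finset.sum_equiv (Equiv.swap i j) ?_ ?_
        · intro k
          simp [Equiv.swap_apply_self]
        · intro k _
          exact (hws k).symm
    · -- strict: termwise
      apply Finset.sum_le_sum
      intro π hπ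
      simp only [hS, Finset.mem_filter, Finset.mem_univ, true_and] at hπ
      apply ENNReal.ofReal_le_ofReal
      have hij' : π i < π j := by
        rcases lt_trichotomy (π i) (π j) with h | h | h
        · exact h
        · exact absurd (congrArg w (π.injective h)) (ne_of_lt hlt)
        · exact absurd (hπ j i h) (not_le.mpr hlt)
      have hjmem : j ∈ Finset.univ.filter (fun k => π k ≤ π j) := by
        simp
      have hsub : Finset.univ.filter (fun k => π k ≤ π i)
          ⊆ (Finset.univ.filter (fun k => π k ≤ π j)).erase j := by
        intro k hk
        simp only [Finset.mem_filter, Finset.mem_univ, true_and] at hk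
        refine Finset.mem_erase.mpr ⟨?_, ?_⟩
        · rintro rfl; exact absurd hk (not_le.mpr hij')
        · simp only [Finset.mem_filter, Finset.mem_univ, true_and]
          exact hk.trans hij'.le
      have h2 : ∑ k ∈ Finset.univ.filter (fun k => π k ≤ π i), w k
          ≤ ∑ k ∈ (Finset.univ.filter (fun k => π k ≤ π j)).erase j, w k :=
        Finset.sum_le_sum_of_subset_of_nonneg hsub (fun k _ _ => (hw k).le)
      have h3 : ∑ k ∈ (Finset.univ.filter (fun k => π k ≤ π j)).erase j, w k
          = (∑ k ∈ Finset.univ.filter (fun k => π k ≤ π j), w k) - w j := by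
        rw [Finset.sum_erase_eq_sub hjmem]
      linarith [hw i]
  · -- w i > w j : RHS is ⊤
    simp only [if_neg hij]
    have hid : (1 : Equiv.Perm (Fin n)) ∈ S := by
      simp only [hS, Finset.mem_filter, Finset.mem_univ, true_and]
      intro a b hab
      exact hmono (le_of_lt hab)
    have : (⊤ : ℝ≥0∞) ≤ ∑ _π ∈ S, (⊤ : ℝ≥0∞) :=
      Finset.single_le_sum (fun _ _ => le_top) hid
    exact le_top.trans this
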